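/- For a weight λ in P_{++}^{(h)}, setting λ'_i = λ_i/h, we have g^{(σ^j(λ))} = (-1)^j ∏_{l=1}^{N} 2cos(π(p_l(λ') - j/N)), where g^{(μ)} = ∏_{i=1}^N (1 + exp(-2πi (e_i, μ)/h)) and σ is the ℤ_N rotation on integrable weights. -/

import Mathlib

/-- The pairing `(e_i, μ)` for a weight `μ = ∑ μ_j Λ_j` of `SL(N)`:
`(e_i, μ) = ∑_{j=i}^{N-1} μ_j - (1/N) ∑_{j=1}^{N-1} j μ_j` (empty first sum for `i = N`). -/
noncomputable def epair (N : ℕ) (μ : ℕ → ℤ) (i : ℕ) : ℝ :=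
  (∑ j ∈ Finset.Icc i (N - 1), (μ j : ℝ))
    - (1 / (N : ℝ)) * ∑ j ∈ Finset.Icc 1 (N - 1), (j : ℝ) * (μ j : ℝ)

/-- `p_i(λ')` for `λ'` a tuple of reals, as in the paper. -/
noncomputable def pp (N : ℕ) (l : ℕ → ℝ) (i : ℕ) : ℝ :=
  (∑ j ∈ Finset.Icc i (N - 1), l j)
    - (1 / (N : ℝ)) * ∑ j ∈ Finset.Icc 1 (N - 1), (j : ℝ) * l j

/-- The `ℤ_N` rotation `σ` on integrable weights at level `h - N`:
`σ(λ) = (h - ∑ λ_j, λ_1, ..., λ_{N-2})` (coordinates outside `1..N-1` set to `0`). -/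
def sigmaRot (N h : ℕ) (μ : ℕ → ℤ) : ℕ → ℤ := fun i =>
  if i = 1 then (h : ℤ) - ∑ j ∈ Finset.Icc 1 (N - 1), μ j
  else if i ≤ N - 1 then μ (i - 1) else 0

/-- `g^{(μ)} = ∏_{i=1}^N (1 + exp(-2πi (e_i, μ)/h))`. -/
noncomputable def gEig (N h : ℕ) (μ : ℕ → ℤ) : ℂ :=
  ∏ i ∈ Finset.Icc 1 N,
    (1 + Complex.exp (-(2 * Real.pi * Complex.I) * (epair N μ i) / (h : ℂ)))

/-- The sum of all `(e_i, μ)` vanishes. -/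
lemma sum_epair_eq_zero (N : ℕ) (hN : 1 ≤ N) (μ : ℕ → ℤ) :
    ∑ i ∈ Finset.Icc 1 N, epair N μ i = 0 := by
  unfold epair
  rw [Finset.sum_sub_distrib, Finset.sum_const, Nat.card_Icc]
  have hNr : (N : ℝ) ≠ 0 := by positivity
  have h1 : ∑ i ∈ Finset.Icc 1 N, ∑ j ∈ Finset.Icc i (N - 1), (μ j : ℝ)
      = ∑ j ∈ Finset.Icc 1 (N - 1), (j : ℝ) * (μ j : ℝ) := by
    rw [Finset.sum_comm' (s' := fun j => Finset.Icc 1 j) (t' := Finset.Icc 1 (N - 1))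
      (by intro x y; simp only [Finset.mem_Icc]; omega)]
    refine Finset.sum_congr rfl fun j hj => ?_
    rw [Finset.sum_const, Nat.card_Icc, nsmul_eq_mul]
    simp
  rw [h1]
  have : (N + 1 - 1 : ℕ) = N := by omega
  rw [this, nsmul_eq_mul]
  field_simp
  ring

/-- `1 + e^{-2πix} = e^{-πix} · 2cos(πx)` as complex numbers, for real `x`. -/
lemma one_add_exp_eq (x : ℝ) :
    (1 : ℂ) + Complex.exp (-(2 * Real.pi * Complex.I) * x)
      = Complex.exp (-(Real.pi * Complex.I) * x) * (2 * Real.cos (Real.pi * x)) := by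
  have hc : (2 : ℂ) * (Real.cos (Real.pi * x) : ℝ)
      = Complex.exp (((Real.pi * x : ℝ) : ℂ) * Complex.I)
        + Complex.exp (-((Real.pi * x : ℝ) : ℂ) * Complex.I) := by
    rw [Complex.ofReal_cos]
    rw [Complex.cos]
    push_cast
    ring
  have e1 : (-(Real.pi * Complex.I) * x + ((Real.pi * x : ℝ) : ℂ) * Complex.I) = 0 := by
    push_cast; ring
  have e2 : (-(Real.pi * Complex.I) * x + -((Real.pi * x : ℝ) : ℂ) * Complex.I)
      = -(2 * Real.pi * Complex.I) * x := by push_cast; ring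
  calc (1 : ℂ) + Complex.exp (-(2 * Real.pi * Complex.I) * x)
      = Complex.exp (-(Real.pi * Complex.I) * x + ((Real.pi * x : ℝ) : ℂ) * Complex.I)
        + Complex.exp (-(Real.pi * Complex.I) * x + -((Real.pi * x : ℝ) : ℂ) * Complex.I) := by
        rw [e1, e2, Complex.exp_zero]
    _ = Complex.exp (-(Real.pi * Complex.I) * x)
          * (Complex.exp (((Real.pi * x : ℝ) : ℂ) * Complex.I)
            + Complex.exp (-((Real.pi * x : ℝ) : ℂ) * Complex.I)) := by
        rw [Complex.exp_add, Complex.exp_add]; ring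
    _ = Complex.exp (-(Real.pi * Complex.I) * x) * (2 * Real.cos (Real.pi * x)) := by
        rw [← hc]

/-- `g^{(μ)}` as a product of cosines. -/
lemma gEig_eq_prod_cos (N h : ℕ) (hN : 1 ≤ N) (hh : 0 < h) (μ : ℕ → ℤ) :
    gEig N h μ = ((∏ i ∈ Finset.Icc 1 N,
      2 * Real.cos (Real.pi * (epair N μ i / h)) : ℝ) : ℂ) := by
  have hhr : (h : ℝ) ≠ 0 := by positivity
  unfold gEig
  have key : ∀ i ∈ Finset.Icc 1 N,
      (1 : ℂ) + Complex.exp (-(2 * Real.pi * Complex.I) * (epair N μ i) / (h : ℂ))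
        = Complex.exp (-(Real.pi * Complex.I) * (epair N μ i / h : ℝ))
          * ((2 * Real.cos (Real.pi * (epair N μ i / h)) : ℝ) : ℂ) := by
    intro i _
    have := one_add_exp_eq (epair N μ i / h)
    push_cast at this ⊢
    rw [mul_div_assoc, ← this]
  rw [Finset.prod_congr rfl key, Finset.prod_mul_distrib, ← Complex.exp_sum]
  have hsum : ∑ i ∈ Finset.Icc 1 N, -(Real.pi * Complex.I) * ((epair N μ i / h : ℝ) : ℂ)
      = 0 := by
    rw [← Finset.mul_sum]
    have : ∑ i ∈ Finset.Icc 1 N, ((epair N μ i / h : ℝ) : ℂ)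
        = (((∑ i ∈ Finset.Icc 1 N, epair N μ i) / h : ℝ) : ℂ) := by
      push_cast [Finset.sum_div]
      rfl
    rw [this, sum_epair_eq_zero N hN μ, zero_div, Complex.ofReal_zero, mul_zero]
  rw [hsum, Complex.exp_zero, one_mul]
  push_cast
  rfl

lemma epair_sigma_ge_two (N h : ℕ) (hN : 2 ≤ N) (μ : ℕ → ℤ) (i : ℕ) (hi2 : 2 ≤ i)
    (hiN : i ≤ N) :
    epair N (sigmaRot N h μ) i = epair N μ (i - 1) - (h : ℝ) / N := by
  have hT : ∑ j ∈ Finset.Icc 1 (N - 1), (j : ℝ) * ((sigmaRot N h μ) j : ℝ)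
      = (h : ℝ) + (∑ j ∈ Finset.Icc 1 (N - 1), (j : ℝ) * (μ j : ℝ))
        - (N : ℝ) * (μ (N - 1) : ℝ) := by
    have hsp : ∑ j ∈ Finset.Icc 1 (N - 1), (j : ℝ) * ((sigmaRot N h μ) j : ℝ)
        = (1 : ℝ) * ((sigmaRot N h μ) 1 : ℝ)
          + ∑ j ∈ Finset.Icc 2 (N - 1), (j : ℝ) * ((sigmaRot N h μ) j : ℝ) := by
      rw [show Finset.Icc 1 (N - 1) = insert 1 (Finset.Icc 2 (N - 1)) by
        ext x; simp [Finset.mem_Icc, Finset.mem_insert]; omega]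
      rw [Finset.sum_insert (by simp [Finset.mem_Icc])]
      norm_num
    have h1 : ((sigmaRot N h μ) 1 : ℝ) = (h : ℝ) - ∑ j ∈ Finset.Icc 1 (N - 1), (μ j : ℝ) := by
      simp only [sigmaRot, if_pos rfl]
      push_cast
      ring
    have h2 : ∑ j ∈ Finset.Icc 2 (N - 1), (j : ℝ) * ((sigmaRot N h μ) j : ℝ)
        = ∑ k ∈ Finset.Icc 1 (N - 2), ((k : ℝ) + 1) * (μ k : ℝ) := by
      refine Finset.sum_nbij' (fun j => j - 1) (fun k => k + 1) ?_ ?_ ?_ ?_ ?_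
      · intro a ha; simp only [Finset.mem_Icc] at *; omega
      · intro a ha; simp only [Finset.mem_Icc] at *; omega
      · intro a ha; simp only [Finset.mem_Icc] at ha; show a - 1 + 1 = a; omega
      · intro a ha; simp only [Finset.mem_Icc] at ha; show a + 1 - 1 = a; omega
      · intro a ha
        simp only [Finset.mem_Icc] at ha
        have : sigmaRot N h μ a = μ (a - 1) := by
          simp only [sigmaRot]
          rw [if_neg (by omega), if_pos (by omega)]
        rw [this]
        have : ((a - 1 : ℕ) : ℝ) = (a : ℝ) - 1 := by
          have : (1 : ℕ) ≤ a := by omega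
          push_cast [Nat.cast_sub this]
          ring
        rw [this]
        ring
    have h3 : ∑ k ∈ Finset.Icc 1 (N - 2), ((k : ℝ) + 1) * (μ k : ℝ)
        = (∑ k ∈ Finset.Icc 1 (N - 1), ((k : ℝ) + 1) * (μ k : ℝ))
          - ((N : ℝ) - 1 + 1) * (μ (N - 1) : ℝ) := by
      rw [show Finset.Icc 1 (N - 1) = insert (N - 1) (Finset.Icc 1 (N - 2)) by
        ext x; simp [Finset.mem_Icc, Finset.mem_insert]; omega]
      rw [Finset.sum_insert (by simp [Finset.mem_Icc]; omega)]
      have : ((N - 1 : ℕ) : ℝ) = (N : ℝ) - 1 := by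
        push_cast [Nat.cast_sub (show 1 ≤ N by omega)]; ring
      rw [this]; ring
    have h4 : ∑ k ∈ Finset.Icc 1 (N - 1), ((k : ℝ) + 1) * (μ k : ℝ)
        = (∑ k ∈ Finset.Icc 1 (N - 1), (k : ℝ) * (μ k : ℝ))
          + ∑ k ∈ Finset.Icc 1 (N - 1), (μ k : ℝ) := by
      rw [← Finset.sum_add_distrib]
      exact Finset.sum_congr rfl fun k _ => by ring
    rw [hsp, h1, h2, h3, h4]
    ring
  have hS : ∑ j ∈ Finset.Icc i (N - 1), ((sigmaRot N h μ) j : ℝ)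
      = (∑ j ∈ Finset.Icc (i - 1) (N - 1), (μ j : ℝ)) - (μ (N - 1) : ℝ) := by
    have h2 : ∑ j ∈ Finset.Icc i (N - 1), ((sigmaRot N h μ) j : ℝ)
        = ∑ k ∈ Finset.Icc (i - 1) (N - 2), (μ k : ℝ) := by
      refine Finset.sum_nbij' (fun j => j - 1) (fun k => k + 1) ?_ ?_ ?_ ?_ ?_
      · intro a ha; simp only [Finset.mem_Icc] at *; omega
      · intro a ha; simp only [Finset.mem_Icc] at *; omega
      · intro a ha; simp only [Finset.mem_Icc] at ha; show a - 1 + 1 = a; omega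
      · intro a ha; simp only [Finset.mem_Icc] at ha; show a + 1 - 1 = a; omega
      · intro a ha
        simp only [Finset.mem_Icc] at ha
        have : sigmaRot N h μ a = μ (a - 1) := by
          simp only [sigmaRot]
          rw [if_neg (by omega), if_pos (by omega)]
        rw [this]
    rw [h2]
    rw [show Finset.Icc (i - 1) (N - 1) = insert (N - 1) (Finset.Icc (i - 1) (N - 2)) by
      ext x; simp [Finset.mem_Icc, Finset.mem_insert]; omega]
    rw [Finset.sum_insert (by simp [Finset.mem_Icc]; omega)]
    ring
  unfold epair
  rw [hS, hT]
  have hNr : (N : ℝ) ≠ 0 := by positivity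
  field_simp
  ring

lemma epair_sigma_one (N h : ℕ) (hN : 2 ≤ N) (μ : ℕ → ℤ) :
    epair N (sigmaRot N h μ) 1 = epair N μ N + (h : ℝ) - (h : ℝ) / N := by
  have key := epair_sigma_ge_two N h hN μ 2 le_rfl hN
  -- epair at 1 = (sigmaRot 1) + epair-like at 2 ... directly:
  have hsplit : ∑ j ∈ Finset.Icc 1 (N - 1), ((sigmaRot N h μ) j : ℝ)
      = ((sigmaRot N h μ) 1 : ℝ) + ∑ j ∈ Finset.Icc 2 (N - 1), ((sigmaRot N h μ) j : ℝ) := by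
    rw [show Finset.Icc 1 (N - 1) = insert 1 (Finset.Icc 2 (N - 1)) by
      ext x; simp [Finset.mem_Icc, Finset.mem_insert]; omega]
    rw [Finset.sum_insert (by simp [Finset.mem_Icc])]
  have h1 : ((sigmaRot N h μ) 1 : ℝ) = (h : ℝ) - ∑ j ∈ Finset.Icc 1 (N - 1), (μ j : ℝ) := by
    simp only [sigmaRot, if_pos rfl]; push_cast; ring
  have hNempty : Finset.Icc N (N - 1) = ∅ := Finset.Icc_eq_empty (by omega)
  unfold epair at key ⊢
  rw [hNempty, Finset.sum_empty]
  rw [hsplit, h1]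
  have h21 : ∑ j ∈ Finset.Icc 2 (N - 1), ((sigmaRot N h μ) j : ℝ)
      = (∑ j ∈ Finset.Icc 1 (N - 1), (μ j : ℝ)) - (1 / (N:ℝ)) *
          (∑ j ∈ Finset.Icc 1 (N - 1), (j:ℝ) * (μ j : ℝ))
        - (h : ℝ) / N
        + (1 / (N:ℝ)) * ∑ j ∈ Finset.Icc 1 (N - 1), (j : ℝ) * ((sigmaRot N h μ) j : ℝ) := by
    have : (2 - 1 : ℕ) = 1 := rfl
    rw [this] at key
    linarith [key]
  rw [h21]
  ring

/-- The main induction, for arbitrary integer weight functions. -/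
lemma gEig_iterate (N h : ℕ) (hN : 2 ≤ N) (hh : N < h) :
    ∀ (j : ℕ) (μ : ℕ → ℤ),
      gEig N h ((sigmaRot N h)^[j] μ) =
        (-1 : ℂ) ^ j *
          ((∏ l ∈ Finset.Icc 1 N,
            2 * Real.cos (Real.pi * (epair N μ l / h - (j : ℝ) / N)) : ℝ) : ℂ) := by
  have hh0 : 0 < h := by omega
  have hhr : (h : ℝ) ≠ 0 := by positivity
  have hNr : (N : ℝ) ≠ 0 := by positivity
  intro j
  induction j with
  | zero =>
    intro μ
    simp only [Function.iterate_zero, id_eq, pow_zero, one_mul, Nat.cast_zero, zero_div,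
      sub_zero]
    exact gEig_eq_prod_cos N h (by omega) hh0 μ
  | succ j ih =>
    intro μ
    rw [Function.iterate_succ_apply, ih (sigmaRot N h μ)]
    have hprod :
        (∏ l ∈ Finset.Icc 1 N,
          2 * Real.cos (Real.pi * (epair N (sigmaRot N h μ) l / h - (j : ℝ) / N)))
        = (-1) * ∏ l ∈ Finset.Icc 1 N,
            2 * Real.cos (Real.pi * (epair N μ l / h - ((j : ℝ) + 1) / N)) := by
      have hcongr : ∀ l ∈ Finset.Icc 1 N,
          2 * Real.cos (Real.pi * (epair N (sigmaRot N h μ) l / h - (j : ℝ) / N))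
          = (if l = 1 then (-1 : ℝ) else 1) *
            (2 * Real.cos (Real.pi * (epair N μ (if l = 1 then N else l - 1) / h
              - ((j : ℝ) + 1) / N))) := by
        intro l hl
        simp only [Finset.mem_Icc] at hl
        by_cases h1 : l = 1
        · subst h1
          rw [if_pos rfl, if_pos rfl, epair_sigma_one N h hN μ]
          have harg : Real.pi * ((epair N μ N + (h:ℝ) - (h:ℝ)/N) / h - (j : ℝ) / N)
              = Real.pi * (epair N μ N / h - ((j : ℝ) + 1) / N) + Real.pi := by
            field_simp
            ring
          rw [harg, Real.cos_add_pi]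
          ring
        · rw [if_neg h1, if_neg h1]
          rw [epair_sigma_ge_two N h hN μ l (by omega) hl.2]
          have harg : Real.pi * ((epair N μ (l - 1) - (h:ℝ)/N) / h - (j : ℝ) / N)
              = Real.pi * (epair N μ (l - 1) / h - ((j : ℝ) + 1) / N) := by
            field_simp
            ring
          rw [harg]
          ring
      rw [Finset.prod_congr rfl hcongr, Finset.prod_mul_distrib]
      congr 1
      · rw [Finset.prod_ite_eq' (Finset.Icc 1 N) 1 (fun _ => (-1 : ℝ))]
        rw [if_pos (Finset.mem_Icc.mpr ⟨le_rfl, by omega⟩)]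
      · refine Finset.prod_nbij' (fun l => if l = 1 then N else l - 1)
          (fun l => if l = N then 1 else l + 1) ?_ ?_ ?_ ?_ ?_
        · intro a ha; simp only [Finset.mem_Icc] at *; split <;> omega
        · intro a ha; simp only [Finset.mem_Icc] at *; split <;> omega
        · intro a ha; simp only [Finset.mem_Icc] at ha; beta_reduce; split_ifs <;> omega
        · intro a ha; simp only [Finset.mem_Icc] at ha; beta_reduce; split_ifs <;> omega
        · intro a ha; rfl
    rw [hprod]
    push_cast
    ring

theorem stmt_15 (N h : ℕ) (hN : 2 ≤ N) (hh : N < h) (lam : ℕ → ℤ)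
    (hpos : ∀ i ∈ Finset.Icc 1 (N - 1), 1 ≤ lam i)
    (hzero : ∀ i, i ∉ Finset.Icc 1 (N - 1) → lam i = 0)
    (hsum : ∑ i ∈ Finset.Icc 1 (N - 1), lam i < (h : ℤ)) :
    ∀ j : ℕ,
      gEig N h ((sigmaRot N h)^[j] lam) =
        (-1 : ℂ) ^ j *
          ((∏ l ∈ Finset.Icc 1 N,
            2 * Real.cos (Real.pi *
              (pp N (fun i => (lam i : ℝ) / h) l - (j : ℝ) / N)) : ℝ) : ℂ) := by
  intro j
  rw [gEig_iterate N h hN hh j lam]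
  congr 2
  refine Finset.prod_congr rfl fun l _ => ?_
  have : pp N (fun i => (lam i : ℝ) / h) l = epair N lam l / h := by
    unfold pp epair
    rw [sub_div, Finset.sum_div, mul_div_assoc, Finset.sum_div]
    congr 1
    congr 1
    exact Finset.sum_congr rfl fun j _ => by beta_reduce; rw [mul_div_assoc]
  rw [this]
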